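/- Let 0 < q < 1, let N ∈ ℕ and let a, b, c, d ∈ ℂ satisfy a·b·c·d·q^N = 1 and c·d·q^j ≠ 1 for 0 ≤ j ≤ N; set θ = 1/√(1−q). Let φ : ℕ×ℕ → ℂ satisfy: φ(m,n) = 0 for all m + n ≤ N; φ(m,n) = (−cd)^m·q^{m(m−1)/2}/(θ^{N+1}·(cd;q)_{N+1}) for all m + n = N+1; and the recursions (SolA) and (SolB) at every pair (m,n) with m + n ≥ N+1. For n ≥ 0 and t ∈ ℂ define F_n(t) = Σ_{k=0}^{n+N} binom_q(n+N,k)·φ(k,n+N−k)·t^k. Then: (i) F_1(t) = (t·cd;q)_{N+1}/(θ^{N+1}·(cd;q)_{N+1}) for all t ∈ ℂ; and (ii) for every n ≥ 1 and t ∈ ℂ: (1 − q^n)·F_{n+1}(t) = θ·[(a+b)(1 − t·cd)·F_n(q·t) + (c+d)(t − q^{n+N}·ab)·F_n(t)] − θ²·(1 − q^{n+N})·[ab·(1 − t·cd)·F_{n−1}(q·t) + t·cd·(t − ab·q^{n+N})·F_{n−1}(t)]. -/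
import Mathlib

noncomputable section

open scoped BigOperators

/-- The q-integer `[k]_q = 1 + q + ⋯ + q^{k-1}` (with `[0]_q = 0`). -/
def qIntC (q : ℂ) (k : ℕ) : ℂ := ∑ i ∈ Finset.range k, q ^ i

/-- The Gaussian (q-)binomial coefficient, characterized by
`qBinom q n 0 = 1`, `qBinom q 0 (k+1) = 0` and the Pascal-type rule
`qBinom q (n+1) (k+1) = q^(k+1) * qBinom q n (k+1) + qBinom q n k`. -/
def qBinom (q : ℂ) : ℕ → ℕ → ℂ
  | _, 0 => 1
  | 0, _ + 1 => 0
  | n + 1, k + 1 => q ^ (k + 1) * qBinom q n (k + 1) + qBinom q n k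

/-- Recursion (SolA) at `(m,n)`; terms that would carry a negative index are written
with truncated subtraction, their coefficients `[0]_q = 0` vanishing. -/
def SolA (q θ a b c d : ℂ) (φ : ℕ → ℕ → ℂ) (m n : ℕ) : Prop :=
  (1 - a * b * c * d * q ^ (m + n)) * φ (m + 1) n =
    θ * (c + d - c * d * (a + b) * q ^ m) * φ m n
      - c * d * qIntC q m * φ (m - 1) n
      + a * b * c * d * q ^ m * qIntC q n * φ m (n - 1)

/-- Recursion (SolB) at `(m,n)`; terms that would carry a negative index are written
with truncated subtraction, their coefficients `[0]_q = 0` vanishing. -/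
def SolB (q θ a b c d : ℂ) (φ : ℕ → ℕ → ℂ) (m n : ℕ) : Prop :=
  (1 - a * b * c * d * q ^ (m + n)) * φ m (n + 1) =
    θ * (a + b - a * b * (c + d) * q ^ n) * φ m n
      - a * b * qIntC q n * φ m (n - 1)
      + a * b * c * d * q ^ n * qIntC q m * φ (m - 1) n

/-- `Gfun q φ ℓ t = Σ_{k=0}^{ℓ} binom_q(ℓ,k)·φ(k,ℓ-k)·t^k`. -/
def Gfun (q : ℂ) (φ : ℕ → ℕ → ℂ) (ℓ : ℕ) (t : ℂ) : ℂ :=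
  ∑ k ∈ Finset.range (ℓ + 1), qBinom q ℓ k * φ k (ℓ - k) * t ^ k

/-- The q-Pochhammer symbol `(a;q)_n = ∏_{j=0}^{n-1} (1 - a q^j)`. -/
def qPoch (q a : ℂ) (n : ℕ) : ℂ := ∏ j ∈ Finset.range n, (1 - a * q ^ j)

lemma qBinom_zero (q : ℂ) (n : ℕ) : qBinom q n 0 = 1 := by
  cases n <;> rfl

lemma qBinom_pascal (q : ℂ) (n k : ℕ) :
    qBinom q (n + 1) (k + 1) = q ^ (k + 1) * qBinom q n (k + 1) + qBinom q n k := rfl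

lemma qBinom_eq_zero (q : ℂ) : ∀ n k : ℕ, n < k → qBinom q n k = 0 := by
  intro n
  induction n with
  | zero => intro k hk; match k, hk with | k + 1, _ => rfl
  | succ n ih =>
    intro k hk
    match k, hk with
    | k + 1, hk =>
      rw [qBinom_pascal, ih (k+1) (by omega), ih k (by omega)]
      ring

lemma qBinom_diag (q : ℂ) (n : ℕ) : qBinom q n n = 1 := by
  induction n with
  | zero => rfl
  | succ n ih => rw [qBinom_pascal, qBinom_eq_zero q n (n+1) (by omega), ih]; ring

lemma qIntC_zero (q : ℂ) : qIntC q 0 = 0 := rfl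

lemma qIntC_mul (q : ℂ) (k : ℕ) : qIntC q k * (q - 1) = q ^ k - 1 := geom_sum_mul q k

lemma qIntC_add (q : ℂ) (m n : ℕ) : qIntC q (m + n) = qIntC q m + q ^ m * qIntC q n := by
  unfold qIntC
  rw [Finset.sum_range_add, Finset.mul_sum]
  simp [pow_add]

def qfact (q : ℂ) (n : ℕ) : ℂ := ∏ i ∈ Finset.range n, qIntC q (i + 1)

lemma qfact_zero (q : ℂ) : qfact q 0 = 1 := rfl

lemma qfact_succ (q : ℂ) (n : ℕ) : qfact q (n + 1) = qfact q n * qIntC q (n + 1) :=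
  Finset.prod_range_succ _ n

lemma key_fact (q : ℂ) : ∀ n k : ℕ, k ≤ n →
    qBinom q n k * qfact q k * qfact q (n - k) = qfact q n := by
  intro n
  induction n with
  | zero => intro k hk; interval_cases k; simp [qBinom_zero, qfact]
  | succ n ih =>
    intro k hk
    match k with
    | 0 => simp [qBinom_zero, qfact_zero]
    | j + 1 =>
      rcases lt_or_ge j n with hj | hj
      · obtain ⟨r, rfl⟩ : ∃ r, n = j + 1 + r := ⟨n - (j+1), by omega⟩
        have h1 := ih (j+1) (by omega)
        have h2 := ih j (by omega)
        rw [show j + 1 + r - (j+1) = r by omega, qfact_succ q j] at h1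
        rw [show j + 1 + r - j = r + 1 by omega, qfact_succ q r] at h2
        rw [qBinom_pascal, show j + 1 + r + 1 - (j+1) = r + 1 by omega,
          qfact_succ q (j+1+r), qfact_succ q r, qfact_succ q j]
        have e3 : qIntC q (j+1+r+1) = qIntC q (j+1) + q^(j+1) * qIntC q (r+1) := by
          have := qIntC_add q (j+1) (r+1)
          rwa [show j+1+(r+1) = j+1+r+1 by omega] at this
        rw [e3]
        linear_combination q^(j+1) * qIntC q (r+1) * h1 + qIntC q (j+1) * h2
      · have hje : j = n := by omega
        subst hje
        simp [qBinom_diag, qfact_zero]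

lemma qfact_ne_zero (q : ℂ) (hq : ∀ i : ℕ, 1 ≤ i → qIntC q i ≠ 0) (m : ℕ) :
    qfact q m ≠ 0 := by
  induction m with
  | zero => simp [qfact_zero]
  | succ m ihm => rw [qfact_succ]; exact mul_ne_zero ihm (hq (m+1) (by omega))

lemma qBinom_mul_qIntC (q : ℂ) (n k : ℕ) (hq : ∀ i : ℕ, 1 ≤ i → qIntC q i ≠ 0) :
    qBinom q (n + 1) (k + 1) * qIntC q (k + 1) = qIntC q (n + 1) * qBinom q n k := by
  rcases le_or_gt k n with hk | hk
  · have h1 := key_fact q (n + 1) (k + 1) (by omega)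
    have h2 := key_fact q n k hk
    rw [show n + 1 - (k + 1) = n - k by omega, qfact_succ q k, qfact_succ q n] at h1
    refine mul_right_cancel₀ (mul_ne_zero (qfact_ne_zero q hq k) (qfact_ne_zero q hq (n-k))) ?_
    calc qBinom q (n+1) (k+1) * qIntC q (k+1) * (qfact q k * qfact q (n - k))
        = qBinom q (n + 1) (k + 1) * (qfact q k * qIntC q (k + 1)) * qfact q (n - k) := by ring
      _ = qfact q n * qIntC q (n + 1) := h1
      _ = qIntC q (n+1) * (qBinom q n k * qfact q k * qfact q (n - k)) := by rw [h2]; ring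
      _ = qIntC q (n+1) * qBinom q n k * (qfact q k * qfact q (n - k)) := by ring
  · rw [qBinom_eq_zero q (n+1) (k+1) (by omega), qBinom_eq_zero q n k hk]
    ring

lemma qBinom_mul_qIntC' (q : ℂ) (n k : ℕ) (hq : ∀ i : ℕ, 1 ≤ i → qIntC q i ≠ 0) :
    qBinom q (n + 1) k * qIntC q (n + 1 - k) = qIntC q (n + 1) * qBinom q n k := by
  rcases le_or_gt k n with hk | hk
  · have h1 := key_fact q (n + 1) k (by omega)
    have h2 := key_fact q n k hk
    rw [show n + 1 - k = (n - k) + 1 by omega, qfact_succ q (n - k),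
      show (n - k) + 1 = n + 1 - k by omega, qfact_succ q n] at h1
    refine mul_right_cancel₀ (mul_ne_zero (qfact_ne_zero q hq k) (qfact_ne_zero q hq (n-k))) ?_
    calc qBinom q (n+1) k * qIntC q (n + 1 - k) * (qfact q k * qfact q (n - k))
        = qBinom q (n + 1) k * qfact q k * (qfact q (n - k) * qIntC q (n + 1 - k)) := by ring
      _ = qfact q n * qIntC q (n + 1) := h1
      _ = qIntC q (n+1) * (qBinom q n k * qfact q k * qfact q (n - k)) := by rw [h2]; ring
      _ = qIntC q (n+1) * qBinom q n k * (qfact q k * qfact q (n - k)) := by ring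
  · rcases Nat.lt_or_ge k (n + 2) with hke | hke
    · have : k = n + 1 := by omega
      subst this
      rw [show n + 1 - (n + 1) = 0 by omega, qIntC_zero, qBinom_eq_zero q n (n+1) (by omega)]
      ring
    · rw [qBinom_eq_zero q (n+1) k (by omega), qBinom_eq_zero q n k hk]
      ring

lemma tri (k : ℕ) : (k+1) * ((k+1) - 1) / 2 = k * (k-1) / 2 + k := by
  rw [← Finset.sum_range_id, ← Finset.sum_range_id, Finset.sum_range_succ]

lemma q_binomial_thm (q : ℂ) : ∀ (n : ℕ) (x : ℂ),
    ∑ k ∈ Finset.range (n + 1), qBinom q n k * q ^ (k * (k - 1) / 2) * x ^ k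
      = ∏ j ∈ Finset.range n, (1 + x * q ^ j) := by
  intro n
  induction n with
  | zero => intro x; simp [qBinom_zero]
  | succ n ih =>
    intro x
    rw [Finset.sum_range_succ' _ (n + 1)]
    have hsplit : ∑ k ∈ Finset.range (n + 1),
        qBinom q (n+1) (k+1) * q ^ ((k+1) * ((k+1)-1) / 2) * x ^ (k+1)
          = (∑ k ∈ Finset.range (n + 1),
              qBinom q n (k+1) * q ^ ((k+1) * ((k+1)-1) / 2 + (k+1)) * x ^ (k+1))
            + x * ∑ k ∈ Finset.range (n + 1),
                qBinom q n k * q ^ (k * (k-1) / 2) * (q*x) ^ k := by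
      rw [Finset.mul_sum, ← Finset.sum_add_distrib]
      refine Finset.sum_congr rfl ?_
      intro k hk
      rw [qBinom_pascal, tri k, mul_pow, pow_add, pow_add, pow_add]
      ring
    rw [hsplit, ih (q*x)]
    have hfirst : (∑ k ∈ Finset.range (n + 1),
        qBinom q n (k+1) * q ^ ((k+1) * ((k+1)-1) / 2 + (k+1)) * x ^ (k+1))
          + qBinom q (n+1) 0 * q ^ (0 * (0-1) / 2) * x ^ 0
        = ∏ j ∈ Finset.range n, (1 + (q*x) * q ^ j) := by
      rw [Finset.sum_range_succ, qBinom_eq_zero q n (n+1) (by omega)]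
      conv_rhs => rw [← ih (q*x), Finset.sum_range_succ' _ n]
      simp only [qBinom_zero, mul_zero, zero_mul, add_zero, pow_zero, mul_one]
      congr 1
      refine Finset.sum_congr rfl ?_
      intro k hk
      rw [mul_pow, pow_add, pow_add]
      ring
    calc (∑ k ∈ Finset.range (n + 1),
            qBinom q n (k+1) * q ^ ((k+1) * ((k+1)-1) / 2 + (k+1)) * x ^ (k+1))
          + x * ∏ j ∈ Finset.range n, (1 + q * x * q ^ j)
          + qBinom q (n+1) 0 * q ^ (0 * (0-1) / 2) * x ^ 0
        = ((∑ k ∈ Finset.range (n + 1),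
            qBinom q n (k+1) * q ^ ((k+1) * ((k+1)-1) / 2 + (k+1)) * x ^ (k+1))
          + qBinom q (n+1) 0 * q ^ (0 * (0-1) / 2) * x ^ 0)
          + x * ∏ j ∈ Finset.range n, (1 + q * x * q ^ j) := by ring
      _ = (1 + x) * ∏ j ∈ Finset.range n, (1 + (q*x) * q ^ j) := by rw [hfirst]; ring
      _ = ∏ j ∈ Finset.range (n+1), (1 + x * q ^ j) := by
          rw [Finset.prod_range_succ' _ n]
          have hc : ∀ j ∈ Finset.range n, (1 + x * q^(j+1)) = (1 + (q*x) * q^j) := by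
            intro j hj; rw [pow_succ]; ring
          rw [Finset.prod_congr rfl hc]
          simp only [pow_zero, mul_one]
          ring

lemma qIntC_real_ne (q : ℝ) (hq0 : 0 < q) (i : ℕ) (hi : 1 ≤ i) :
    qIntC (q : ℂ) i ≠ 0 := by
  have hcast : qIntC (q : ℂ) i = ((∑ j ∈ Finset.range i, q ^ j : ℝ) : ℂ) := by
    unfold qIntC; push_cast; rfl
  rw [hcast]
  have hpos : 0 < ∑ j ∈ Finset.range i, q ^ j :=
    Finset.sum_pos (fun j _ => pow_pos hq0 j) (by simp; omega)
  exact_mod_cast hpos.ne'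

theorem stmt15 (q : ℝ) (hq0 : 0 < q) (hq1 : q < 1) (N : ℕ)
    (a b c d : ℂ)
    (hsing : a * b * c * d * (q : ℂ) ^ N = 1)
    (hcd : ∀ j : ℕ, j ≤ N → c * d * (q : ℂ) ^ j ≠ 1)
    (θ : ℂ) (hθ : θ = ((1 / Real.sqrt (1 - q) : ℝ) : ℂ))
    (φ : ℕ → ℕ → ℂ)
    (h0 : ∀ m n : ℕ, m + n ≤ N → φ m n = 0)
    (h1 : ∀ m n : ℕ, m + n = N + 1 →
      φ m n = (-(c * d)) ^ m * (q : ℂ) ^ (m * (m - 1) / 2) /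
        (θ ^ (N + 1) * qPoch (q : ℂ) (c * d) (N + 1)))
    (hA : ∀ m n : ℕ, N + 1 ≤ m + n → SolA (q : ℂ) θ a b c d φ m n)
    (hB : ∀ m n : ℕ, N + 1 ≤ m + n → SolB (q : ℂ) θ a b c d φ m n) :
    (∀ t : ℂ,
      Gfun (q : ℂ) φ (1 + N) t =
        qPoch (q : ℂ) (t * c * d) (N + 1) / (θ ^ (N + 1) * qPoch (q : ℂ) (c * d) (N + 1))) ∧
    (∀ n : ℕ, 1 ≤ n → ∀ t : ℂ,
      (1 - (q : ℂ) ^ n) * Gfun (q : ℂ) φ (n + 1 + N) t =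
        θ * ((a + b) * (1 - t * c * d) * Gfun (q : ℂ) φ (n + N) ((q : ℂ) * t)
              + (c + d) * (t - (q : ℂ) ^ (n + N) * a * b) * Gfun (q : ℂ) φ (n + N) t)
          - θ ^ 2 * (1 - (q : ℂ) ^ (n + N)) *
              (a * b * (1 - t * c * d) * Gfun (q : ℂ) φ (n - 1 + N) ((q : ℂ) * t)
                + t * c * d * (t - a * b * (q : ℂ) ^ (n + N)) *
                    Gfun (q : ℂ) φ (n - 1 + N) t)) := by
  have hInt : ∀ i : ℕ, 1 ≤ i → qIntC (q : ℂ) i ≠ 0 := fun i hi => qIntC_real_ne q hq0 i hi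
  constructor
  · -- Part (i)
    intro t
    rw [show 1 + N = N + 1 by omega]
    unfold Gfun
    have hterm : ∀ k ∈ Finset.range (N + 1 + 1),
        qBinom (q:ℂ) (N+1) k * φ k (N+1-k) * t ^ k
          = (qBinom (q:ℂ) (N+1) k * (q:ℂ) ^ (k*(k-1)/2) * (-(t*c*d)) ^ k)
              / (θ ^ (N + 1) * qPoch (q:ℂ) (c * d) (N + 1)) := by
      intro k hk
      simp only [Finset.mem_range] at hk
      rw [h1 k (N+1-k) (by omega), div_eq_mul_inv, div_eq_mul_inv,
        show ((-(t*c*d)) : ℂ) ^ k = (-(c*d)) ^ k * t ^ k by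
          rw [show (-(t*c*d) : ℂ) = (-(c*d))*t by ring, mul_pow]]
      ring
    rw [Finset.sum_congr rfl hterm, ← Finset.sum_div, q_binomial_thm (q:ℂ) (N+1) (-(t*c*d))]
    congr 1
    unfold qPoch
    refine Finset.prod_congr rfl ?_
    intro j hj
    ring
  · -- Part (ii)
    intro n hn t
    obtain ⟨m, hm⟩ : ∃ m, n + N = m + 1 := ⟨n + N - 1, by omega⟩
    rw [show n + 1 + N = (m + 1) + 1 by omega, show n - 1 + N = m by omega,
      show n + N = m + 1 by omega]
    have hqn : a * b * c * d * (q:ℂ) ^ (m + 1) = (q:ℂ) ^ n := by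
      calc a * b * c * d * (q:ℂ) ^ (m + 1)
          = a * b * c * d * (q:ℂ) ^ N * (q:ℂ) ^ n := by
            rw [mul_assoc (a * b * c * d), ← pow_add, show N + n = m + 1 by omega]
        _ = (q:ℂ) ^ n := by rw [hsing]; ring
    have hθ2 : θ ^ 2 * (1 - (q:ℂ)) = 1 := by
      have h1q : (0:ℝ) < 1 - q := by linarith
      have e1 : θ ^ 2 = ((1 / (1 - q) : ℝ) : ℂ) := by
        rw [hθ]
        norm_cast
        rw [div_pow, one_pow, Real.sq_sqrt h1q.le]
      rw [e1, show (1 : ℂ) - (q:ℂ) = ((1 - q : ℝ) : ℂ) by push_cast; ring,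
        ← Complex.ofReal_mul, one_div, inv_mul_cancel₀ h1q.ne', Complex.ofReal_one]
    have hIntl : qIntC (q:ℂ) (m + 1) = θ ^ 2 * (1 - (q:ℂ) ^ (m + 1)) := by
      have hgm := qIntC_mul (q:ℂ) (m + 1)
      linear_combination (-(qIntC (q:ℂ) (m+1))) * hθ2 - θ ^ 2 * hgm
    have hB' : ∀ k ∈ Finset.range (m + 1 + 1),
        (1 - (q:ℂ) ^ n) * φ k (m + 1 + 1 - k)
          = θ * (a + b - a * b * (c + d) * (q:ℂ) ^ (m + 1 - k)) * φ k (m + 1 - k)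
            - a * b * qIntC (q:ℂ) (m + 1 - k) * φ k (m + 1 - k - 1)
            + a * b * c * d * (q:ℂ) ^ (m + 1 - k) * qIntC (q:ℂ) k * φ (k - 1) (m + 1 - k) := by
      intro k hk
      simp only [Finset.mem_range] at hk
      have hb := hB k (m + 1 - k) (by omega)
      unfold SolB at hb
      rw [show k + (m + 1 - k) = m + 1 by omega, hqn,
        show (m + 1 - k) + 1 = m + 1 + 1 - k by omega] at hb
      exact hb
    have hA' : ∀ k ∈ Finset.range (m + 1 + 1),
        (1 - (q:ℂ) ^ n) * φ (k + 1) (m + 1 - k)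
          = θ * (c + d - c * d * (a + b) * (q:ℂ) ^ k) * φ k (m + 1 - k)
            - c * d * qIntC (q:ℂ) k * φ (k - 1) (m + 1 - k)
            + a * b * c * d * (q:ℂ) ^ k * qIntC (q:ℂ) (m + 1 - k) * φ k (m + 1 - k - 1) := by
      intro k hk
      simp only [Finset.mem_range] at hk
      have ha := hA k (m + 1 - k) (by omega)
      unfold SolA at ha
      rw [show k + (m + 1 - k) = m + 1 by omega, hqn] at ha
      exact ha
    have hLHS : (1 - (q:ℂ) ^ n) * Gfun (q:ℂ) φ (m + 1 + 1) t
        = (∑ k ∈ Finset.range (m + 1 + 1),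
            (q:ℂ) ^ k * qBinom (q:ℂ) (m+1) k * ((1 - (q:ℂ) ^ n) * φ k (m + 1 + 1 - k)) * t ^ k)
          + ∑ k ∈ Finset.range (m + 1 + 1),
            qBinom (q:ℂ) (m+1) k * ((1 - (q:ℂ) ^ n) * φ (k + 1) (m + 1 - k)) * t ^ (k + 1) := by
      unfold Gfun
      rw [Finset.mul_sum, Finset.sum_range_succ' _ (m + 1 + 1)]
      have e1 : ∀ k ∈ Finset.range (m + 1 + 1),
          (1 - (q:ℂ)^n) * (qBinom (q:ℂ) (m+1+1) (k+1) * φ (k+1) (m+1+1-(k+1)) * t^(k+1))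
            = (q:ℂ)^(k+1) * qBinom (q:ℂ) (m+1) (k+1) * ((1-(q:ℂ)^n) * φ (k+1) (m+1-k)) * t^(k+1)
              + qBinom (q:ℂ) (m+1) k * ((1-(q:ℂ)^n) * φ (k+1) (m+1-k)) * t^(k+1) := by
        intro k hk
        rw [qBinom_pascal, show m+1+1-(k+1) = m+1-k by omega]
        ring
      rw [Finset.sum_congr rfl e1, Finset.sum_add_distrib]
      have e2 : (∑ k ∈ Finset.range (m + 1 + 1),
          (q:ℂ)^(k+1) * qBinom (q:ℂ) (m+1) (k+1) * ((1-(q:ℂ)^n) * φ (k+1) (m+1-k)) * t^(k+1))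
            = ∑ k ∈ Finset.range (m + 1),
            (q:ℂ)^(k+1) * qBinom (q:ℂ) (m+1) (k+1) * ((1-(q:ℂ)^n) * φ (k+1) (m+1-k)) * t^(k+1) := by
        rw [Finset.sum_range_succ, qBinom_eq_zero (q:ℂ) (m+1) (m+1+1) (by omega)]
        ring
      have e3 : (∑ k ∈ Finset.range (m + 1 + 1),
          (q:ℂ) ^ k * qBinom (q:ℂ) (m+1) k * ((1 - (q:ℂ) ^ n) * φ k (m + 1 + 1 - k)) * t ^ k)
            = (∑ k ∈ Finset.range (m + 1),
              (q:ℂ)^(k+1) * qBinom (q:ℂ) (m+1) (k+1) * ((1-(q:ℂ)^n) * φ (k+1) (m+1-k)) * t^(k+1))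
              + (1 - (q:ℂ)^n) * φ 0 (m + 1 + 1) := by
        rw [Finset.sum_range_succ' _ (m + 1)]
        congr 1
        · refine Finset.sum_congr rfl ?_
          intro k hk
          rw [show m+1+1-(k+1) = m+1-k by omega]
        · rw [qBinom_zero]
          simp
      rw [e2, e3, qBinom_zero]
      simp only [Nat.sub_zero, pow_zero, one_mul, mul_one]
      ring
    have hT : (∑ k ∈ Finset.range (m + 1 + 1),
        (q:ℂ) ^ k * qBinom (q:ℂ) (m+1) k * ((1 - (q:ℂ) ^ n) * φ k (m + 1 + 1 - k)) * t ^ k)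
          = ∑ k ∈ Finset.range (m + 1 + 1),
            (θ * (a + b) * (qBinom (q:ℂ) (m+1) k * φ k (m+1-k) * ((q:ℂ)*t) ^ k)
              - θ * (a * b * (c + d)) *
                  ((q:ℂ)^(m+1) * (qBinom (q:ℂ) (m+1) k * φ k (m+1-k) * t ^ k))
              - a * b * (qBinom (q:ℂ) (m+1) k * qIntC (q:ℂ) (m+1-k) * φ k (m+1-k-1) * ((q:ℂ)*t) ^ k)
              + a * b * c * d *
                  ((q:ℂ)^(m+1) * (qBinom (q:ℂ) (m+1) k * qIntC (q:ℂ) k * φ (k-1) (m+1-k) * t ^ k))) := by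
      refine Finset.sum_congr rfl ?_
      intro k hk
      have hkr := hk
      simp only [Finset.mem_range] at hkr
      rw [hB' k hk, show (q:ℂ)^(m+1) = (q:ℂ)^(m+1-k) * (q:ℂ)^k by
        rw [← pow_add]; congr 1; omega, mul_pow]
      ring
    have hU : (∑ k ∈ Finset.range (m + 1 + 1),
        qBinom (q:ℂ) (m+1) k * ((1 - (q:ℂ) ^ n) * φ (k + 1) (m + 1 - k)) * t ^ (k + 1))
          = ∑ k ∈ Finset.range (m + 1 + 1),
            (θ * ((c + d) * t) * (qBinom (q:ℂ) (m+1) k * φ k (m+1-k) * t ^ k)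
              - θ * (c * d * (a + b) * t) * (qBinom (q:ℂ) (m+1) k * φ k (m+1-k) * ((q:ℂ)*t) ^ k)
              - c * d * t * (qBinom (q:ℂ) (m+1) k * qIntC (q:ℂ) k * φ (k-1) (m+1-k) * t ^ k)
              + a * b * c * d * t *
                  (qBinom (q:ℂ) (m+1) k * qIntC (q:ℂ) (m+1-k) * φ k (m+1-k-1) * ((q:ℂ)*t) ^ k)) := by
      refine Finset.sum_congr rfl ?_
      intro k hk
      rw [hA' k hk, mul_pow]
      ring
    have hS3 : (∑ k ∈ Finset.range (m + 1 + 1),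
        qBinom (q:ℂ) (m+1) k * qIntC (q:ℂ) (m+1-k) * φ k (m+1-k-1) * ((q:ℂ)*t) ^ k)
          = qIntC (q:ℂ) (m+1) * Gfun (q:ℂ) φ m ((q:ℂ)*t) := by
      rw [Finset.sum_range_succ, Nat.sub_self, qIntC_zero]
      simp only [mul_zero, zero_mul, add_zero]
      unfold Gfun
      rw [Finset.mul_sum]
      refine Finset.sum_congr rfl ?_
      intro k hk
      simp only [Finset.mem_range] at hk
      rw [show m+1-k-1 = m-k by omega, qBinom_mul_qIntC' (q:ℂ) m k hInt]
      ring
    have hS4 : (∑ k ∈ Finset.range (m + 1 + 1),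
        qBinom (q:ℂ) (m+1) k * qIntC (q:ℂ) k * φ (k-1) (m+1-k) * t ^ k)
          = qIntC (q:ℂ) (m+1) * (t * Gfun (q:ℂ) φ m t) := by
      rw [Finset.sum_range_succ' _ (m + 1), qIntC_zero]
      simp only [mul_zero, zero_mul, add_zero, pow_zero, mul_one]
      unfold Gfun
      rw [Finset.mul_sum, Finset.mul_sum]
      refine Finset.sum_congr rfl ?_
      intro k hk
      simp only [Finset.mem_range] at hk
      rw [show k+1-1 = k by omega, show m+1-(k+1) = m-k by omega,
        qBinom_mul_qIntC (q:ℂ) m k hInt]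
      ring
    rw [hLHS, hT, hU]
    simp only [Finset.sum_add_distrib, Finset.sum_sub_distrib, ← Finset.mul_sum]
    rw [hS3, hS4, hIntl]
    unfold Gfun
    ring

end
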